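/- arXiv:math/0302354 — 2 statements merged into one kernel-verified Lean document; each statement's English description precedes it below -/
import Mathlib

section
/- In the Markov setting, assume the submatrix (a_{ij})_{i,j∈S} is irreducible and aperiodic (primitive) and that S ≠ {1,...,m} (there is at least one hole). Then the limit γ = lim_{k→∞} −(1/k)·log Leb(Λ_k) exists and equals −log ρ(Q_1), where ρ(Q_1) is the spectral radius of the weighted transition matrix Q_1 (with β = 1) and Leb denotes Lebesgue measure; i.e., the escape rate of (Λ, F) is −log ρ(Q_1). -/
open MeasureTheory Filter Topology

/-- Spectral radius of a square real matrix: the largest modulus of a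
(complex) eigenvalue, i.e. of a root of the characteristic polynomial of the
complexified matrix. -/
noncomputable def specRad {n : ℕ} (M : Matrix (Fin n) (Fin n) ℝ) : ℝ :=
  sSup {r : ℝ | ∃ μ : ℂ, (M.map (fun x => (x : ℂ))).charpoly.IsRoot μ ∧ r = ‖μ‖}

/-- Primitivity (irreducibility + aperiodicity) of a nonnegative square matrix:
some power has all entries positive. -/
def MatPrimitive {n : Type*} [Fintype n] [DecidableEq n] (M : Matrix n n ℝ) : Prop :=
  ∃ k : ℕ, 0 < k ∧ ∀ i j, 0 < (M ^ k) i j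

/-- The open interval `J_j = (c_{j-1}, c_j)` of the Markov partition. -/
def Jset (m : ℕ) (c : Fin (m + 1) → ℝ) (j : Fin m) : Set ℝ :=
  Set.Ioo (c j.castSucc) (c j.succ)

/-- The domain `D = ⋃_{j ∈ S} J_j` (the complement of the holes). -/
def Dset (m : ℕ) (c : Fin (m + 1) → ℝ) (S : Finset (Fin m)) : Set ℝ :=
  ⋃ j ∈ S, Jset m c j

/-! ### Auxiliary material -/

open Polynomial in
theorem EscAux.spectrum_eq_root {n : ℕ} (M : Matrix (Fin n) (Fin n) ℂ) (μ : ℂ) :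
    μ ∈ spectrum ℂ M ↔ M.charpoly.IsRoot μ := by
  rw [spectrum.mem_iff, Matrix.charpoly, Polynomial.IsRoot]
  have : (Matrix.charmatrix M).det.eval μ = (algebraMap ℂ (Matrix (Fin n) (Fin n) ℂ) μ - M).det := by
    rw [← Polynomial.coe_evalRingHom, RingHom.map_det]
    congr 1
    ext i j
    by_cases h : i = j <;>
      simp [h, Matrix.charmatrix_apply, Matrix.algebraMap_matrix_apply, Matrix.one_apply]
  rw [this, Matrix.isUnit_iff_isUnit_det, isUnit_iff_ne_zero, not_ne_iff]

theorem EscAux.specRad_eq_toReal {n : ℕ} (hn : 0 < n) (M : Matrix (Fin n) (Fin n) ℝ) :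
    specRad M = (spectralRadius ℂ (M.map (fun x => (x : ℂ)))).toReal := by
  set M' := M.map (fun x => (x : ℂ)) with hM'
  have : Nonempty (Fin n) := ⟨⟨0, hn⟩⟩
  have hdeg : M'.charpoly.degree = Fintype.card (Fin n) := Matrix.charpoly_degree_eq_dim M'
  have hroot : ∃ μ : ℂ, M'.charpoly.IsRoot μ := by
    obtain ⟨z, hz⟩ := Complex.exists_root (show 0 < M'.charpoly.degree by
      rw [hdeg]; exact_mod_cast Fintype.card_pos)
    exact ⟨z, hz⟩
  have hfin : {μ : ℂ | M'.charpoly.IsRoot μ}.Finite :=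
    Polynomial.finite_setOf_isRoot M'.charpoly_monic.ne_zero
  set Rset := {r : ℝ | ∃ μ : ℂ, M'.charpoly.IsRoot μ ∧ r = ‖μ‖} with hR
  have hRim : Rset = (fun μ : ℂ => ‖μ‖) '' {μ : ℂ | M'.charpoly.IsRoot μ} := by
    ext r; simp [hR, Set.mem_image, eq_comm]
  have hRfin : Rset.Finite := by rw [hRim]; exact hfin.image _
  have hRne : Rset.Nonempty := by
    obtain ⟨μ, hμ⟩ := hroot; exact ⟨‖μ‖, μ, hμ, rfl⟩
  obtain ⟨μ₀, hμ₀, hval⟩ := hRne.csSup_mem hRfin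
  have hspecrad : spectralRadius ℂ M' = ENNReal.ofReal (sSup Rset) := by
    apply le_antisymm
    · rw [spectralRadius]
      refine iSup₂_le fun μ hμ => ?_
      rw [← enorm_eq_nnnorm, ← ofReal_norm]
      apply ENNReal.ofReal_le_ofReal
      exact le_csSup hRfin.bddAbove ⟨μ, (EscAux.spectrum_eq_root M' μ).mp hμ, rfl⟩
    · rw [spectralRadius, hval, ofReal_norm, enorm_eq_nnnorm]
      have hmem : μ₀ ∈ spectrum ℂ M' := (EscAux.spectrum_eq_root M' μ₀).mpr hμ₀
      exact le_iSup₂ (f := fun (μ : ℂ) (_ : μ ∈ spectrum ℂ M') => (‖μ‖₊ : ENNReal)) μ₀ hmem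
  rw [hspecrad, ENNReal.toReal_ofReal (hval ▸ norm_nonneg μ₀)]
  rfl

/-! ### Real-analysis lemmas -/

theorem EscAux.tendsto_rpow_one_div_const (C : ℝ) (hC : 0 < C) :
    Tendsto (fun k : ℕ => C ^ ((1:ℝ)/(k:ℝ))) atTop (𝓝 1) := by
  have h1 : Tendsto (fun k : ℕ => Real.log C * ((1:ℝ)/(k:ℝ))) atTop (𝓝 0) := by
    simpa using (tendsto_one_div_atTop_nhds_zero_nat.const_mul (Real.log C))
  have h2 := (Real.continuous_exp.tendsto 0).comp h1
  rw [Real.exp_zero] at h2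
  apply h2.congr
  intro k
  simp [Function.comp, Real.rpow_def_of_pos hC]

theorem EscAux.radius_pos (u : ℕ → ℝ) (r q C : ℝ) (hq : 0 < q) (hC : 0 < C)
    (hu : ∀ k, 1 ≤ k → C * q ^ k ≤ u k)
    (hten : Tendsto (fun k : ℕ => u k ^ ((1:ℝ)/(k:ℝ))) atTop (𝓝 r)) : 0 < r := by
  have key : Tendsto (fun k : ℕ => C ^ ((1:ℝ)/(k:ℝ)) * q) atTop (𝓝 (1 * q)) :=
    (EscAux.tendsto_rpow_one_div_const C hC).mul_const q
  have hle : ∀ᶠ k : ℕ in atTop, C ^ ((1:ℝ)/(k:ℝ)) * q ≤ u k ^ ((1:ℝ)/(k:ℝ)) := by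
    filter_upwards [eventually_ge_atTop 1] with k hk
    have hkpos : (0:ℝ) < (k:ℝ) := by exact_mod_cast hk
    have h1 : (C * q ^ k) ^ ((1:ℝ)/(k:ℝ)) ≤ u k ^ ((1:ℝ)/(k:ℝ)) :=
      Real.rpow_le_rpow (by positivity) (hu k hk) (by positivity)
    calc C ^ ((1:ℝ)/(k:ℝ)) * q = (C * q ^ k) ^ ((1:ℝ)/(k:ℝ)) := by
          rw [Real.mul_rpow hC.le (by positivity), ← Real.rpow_natCast q k,
            ← Real.rpow_mul hq.le, mul_one_div, div_self hkpos.ne', Real.rpow_one]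
      _ ≤ u k ^ ((1:ℝ)/(k:ℝ)) := h1
  have : 1 * q ≤ r := le_of_tendsto_of_tendsto key hten hle
  linarith

theorem EscAux.log_limit (u g : ℕ → ℝ) (r c₁ c₂ : ℝ) (hr : 0 < r)
    (hu : ∀ k, 1 ≤ k → 0 < u k) (hc₁ : 0 < c₁)
    (hl : ∀ k, 1 ≤ k → c₁ * u k ≤ g k) (hu2 : ∀ k, 1 ≤ k → g k ≤ c₂ * u k)
    (hten : Tendsto (fun k : ℕ => u k ^ ((1:ℝ)/(k:ℝ))) atTop (𝓝 r)) :
    Tendsto (fun k : ℕ => -((1:ℝ)/(k:ℝ)) * Real.log (g k)) atTop (𝓝 (-Real.log r)) := by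
  have hc₂ : 0 < c₂ := by
    have h1 := hl 1 le_rfl
    have h2 := hu2 1 le_rfl
    have := hu 1 le_rfl
    nlinarith
  have hlog : Tendsto (fun k : ℕ => ((1:ℝ)/(k:ℝ)) * Real.log (u k)) atTop (𝓝 (Real.log r)) := by
    have h1 : Tendsto (fun k : ℕ => Real.log (u k ^ ((1:ℝ)/(k:ℝ)))) atTop (𝓝 (Real.log r)) :=
      ((Real.continuousAt_log hr.ne').tendsto).comp hten
    apply h1.congr'
    filter_upwards [eventually_ge_atTop 1] with k hk
    rw [Real.log_rpow (hu k hk), mul_comm]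
  have hdiff : Tendsto (fun k : ℕ =>
      ((1:ℝ)/(k:ℝ)) * (Real.log (g k) - Real.log (u k))) atTop (𝓝 0) := by
    set B := max |Real.log c₁| |Real.log c₂| with hB
    have hBn : Tendsto (fun k : ℕ => B / (k:ℝ)) atTop (𝓝 0) :=
      Tendsto.div_atTop tendsto_const_nhds tendsto_natCast_atTop_atTop
    refine squeeze_zero_norm' ?_ hBn
    filter_upwards [eventually_ge_atTop 1] with k hk
    have hkpos : (0:ℝ) < (k:ℝ) := by exact_mod_cast hk
    have hgk : 0 < g k := lt_of_lt_of_le (mul_pos hc₁ (hu k hk)) (hl k hk)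
    have hub : Real.log (g k) - Real.log (u k) ≤ Real.log c₂ := by
      have := Real.log_le_log hgk (hu2 k hk)
      rw [Real.log_mul hc₂.ne' (hu k hk).ne'] at this
      linarith
    have hlb : Real.log c₁ ≤ Real.log (g k) - Real.log (u k) := by
      have := Real.log_le_log (mul_pos hc₁ (hu k hk)) (hl k hk)
      rw [Real.log_mul hc₁.ne' (hu k hk).ne'] at this
      linarith
    have habs : |Real.log (g k) - Real.log (u k)| ≤ B := by
      rw [abs_le]
      constructor
      · have h3 := neg_abs_le (Real.log c₁)
        have h4 := le_max_left |Real.log c₁| |Real.log c₂|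
        linarith
      · have h3 := le_abs_self (Real.log c₂)
        have h4 := le_max_right |Real.log c₁| |Real.log c₂|
        linarith
    rw [Real.norm_eq_abs, abs_mul, abs_of_nonneg (by positivity : (0:ℝ) ≤ (1:ℝ)/(k:ℝ)),
      div_eq_mul_inv, one_mul, mul_comm]
    exact mul_le_mul_of_nonneg_right habs (by positivity)
  have hsum : Tendsto (fun k : ℕ => ((1:ℝ)/(k:ℝ)) * Real.log (g k)) atTop (𝓝 (Real.log r)) := by
    have h5 := hlog.add hdiff
    rw [add_zero] at h5
    apply h5.congr
    intro k; ring
  have h6 := hsum.neg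
  apply h6.congr
  intro k; ring

/-! ### Nonnegative matrix lemmas -/

namespace EscAux
variable {n : ℕ} (Q : Matrix (Fin n) (Fin n) ℝ) (S : Finset (Fin n))

theorem pow_entry_nonneg (hQ0 : ∀ i j, 0 ≤ Q i j) : ∀ k i j, 0 ≤ (Q ^ k) i j := by
  intro k
  induction k with
  | zero => intro i j; rw [pow_zero]; by_cases h : i = j <;> simp [Matrix.one_apply, h]
  | succ k ih =>
    intro i j
    rw [pow_succ, Matrix.mul_apply]
    exact Finset.sum_nonneg fun l _ => mul_nonneg (ih i l) (hQ0 l j)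

theorem row_expand (k : ℕ) (i : Fin n) :
    ∑ j, (Q ^ (k+1)) i j = ∑ l, Q i l * ∑ j, (Q ^ k) l j := by
  simp_rw [pow_succ', Matrix.mul_apply, Finset.mul_sum]
  exact Finset.sum_comm

theorem block_expand (U : Finset (Fin n)) (k : ℕ) :
    ∑ i ∈ U, ∑ j, (Q ^ (k+1)) i j = ∑ l, (∑ i ∈ U, Q i l) * (∑ j, (Q ^ k) l j) := by
  simp_rw [row_expand Q k, Finset.sum_mul]
  exact Finset.sum_comm

theorem T_succ_ge (hQ0 : ∀ i j, 0 ≤ Q i j) (q : ℝ) (hq : ∀ j ∈ S, q ≤ ∑ i ∈ S, Q i j)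
    (hQS : ∀ i j, j ∉ S → Q i j = 0) (k : ℕ) :
    q * (∑ i ∈ S, ∑ j, (Q ^ k) i j) ≤ ∑ i ∈ S, ∑ j, (Q ^ (k + 1)) i j := by
  rw [block_expand Q S k, ← Finset.sum_subset (Finset.subset_univ S) (by
    intro l _ hl
    rw [Finset.sum_eq_zero fun i _ => hQS i l hl, zero_mul])]
  rw [Finset.mul_sum]
  apply Finset.sum_le_sum
  intro l hl
  exact mul_le_mul_of_nonneg_right (hq l hl)
    (Finset.sum_nonneg fun j _ => pow_entry_nonneg Q hQ0 k l j)

theorem P_succ_le (hQ0 : ∀ i j, 0 ≤ Q i j) (hQS : ∀ i j, j ∉ S → Q i j = 0) (k : ℕ) :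
    ∑ i, ∑ j, (Q ^ (k+1)) i j ≤ (∑ l, ∑ i, Q i l) * (∑ i ∈ S, ∑ j, (Q ^ k) i j) := by
  rw [block_expand Q Finset.univ k, ← Finset.sum_subset (Finset.subset_univ S) (by
    intro l _ hl
    rw [Finset.sum_eq_zero fun i _ => hQS i l hl, zero_mul])]
  set T := ∑ i ∈ S, ∑ j, (Q ^ k) i j with hT
  calc ∑ l ∈ S, (∑ i, Q i l) * (∑ j, (Q ^ k) l j)
      ≤ ∑ l ∈ S, (∑ i, Q i l) * T := by
        apply Finset.sum_le_sum
        intro l hl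
        apply mul_le_mul_of_nonneg_left _ (Finset.sum_nonneg fun i _ => hQ0 i l)
        exact Finset.single_le_sum (f := fun l => ∑ j, (Q ^ k) l j) (fun l _ =>
          Finset.sum_nonneg fun j _ => pow_entry_nonneg Q hQ0 k l j) hl
    _ ≤ ∑ l, (∑ i, Q i l) * T := by
        apply Finset.sum_le_sum_of_subset_of_nonneg (Finset.subset_univ S)
        intro l _ _
        have hT0 : 0 ≤ T := Finset.sum_nonneg fun i _ =>
          Finset.sum_nonneg fun j _ => pow_entry_nonneg Q hQ0 k i j
        exact mul_nonneg (Finset.sum_nonneg fun i _ => hQ0 i l) hT0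
    _ = (∑ l, ∑ i, Q i l) * T := (Finset.sum_mul _ _ _).symm

end EscAux

/-! ### Norm / Gelfand section -/

section NormSec
attribute [local instance] Matrix.linftyOpNormedRing Matrix.linftyOpNormedAlgebra
open scoped NNReal ENNReal
variable {n : ℕ}

theorem EscAux.entry_le_norm (B : Matrix (Fin n) (Fin n) ℂ) (i j : Fin n) : ‖B i j‖ ≤ ‖B‖ := by
  have h : ‖B i j‖₊ ≤ ‖B‖₊ := by
    rw [Matrix.linfty_opNNNorm_def]
    exact le_trans (Finset.single_le_sum (f := fun j => ‖B i j‖₊) (fun k _ => zero_le)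
        (Finset.mem_univ j))
      (Finset.le_sup (f := fun i => ∑ j, ‖B i j‖₊) (Finset.mem_univ i))
  exact_mod_cast h

theorem EscAux.norm_le_sum (B : Matrix (Fin n) (Fin n) ℂ) : ‖B‖ ≤ ∑ i, ∑ j, ‖B i j‖ := by
  have h : ‖B‖₊ ≤ ∑ i, ∑ j, ‖B i j‖₊ := by
    rw [Matrix.linfty_opNNNorm_def]
    exact Finset.sup_le fun i _ =>
      Finset.single_le_sum (f := fun i => ∑ j, ‖B i j‖₊) (fun k _ => zero_le) (Finset.mem_univ i)
  calc ‖B‖ = ((‖B‖₊ : ℝ≥0) : ℝ) := rfl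
    _ ≤ ((∑ i, ∑ j, ‖B i j‖₊ : ℝ≥0) : ℝ) := by exact_mod_cast h
    _ = ∑ i, ∑ j, ‖B i j‖ := by push_cast; rfl

theorem EscAux.gelfand_real (hn : 0 < n) (B : Matrix (Fin n) (Fin n) ℂ) :
    Tendsto (fun k : ℕ => ‖B ^ k‖ ^ ((1 : ℝ)/(k : ℝ))) atTop
      (𝓝 ((spectralRadius ℂ B).toReal)) := by
  haveI : Nonempty (Fin n) := ⟨⟨0, hn⟩⟩
  haveI : CompleteSpace (Matrix (Fin n) (Fin n) ℂ) := FiniteDimensional.complete ℂ _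
  have h := spectrum.pow_nnnorm_pow_one_div_tendsto_nhds_spectralRadius B
  have hne : spectralRadius ℂ B ≠ ⊤ :=
    ne_top_of_le_ne_top ENNReal.coe_ne_top (spectrum.spectralRadius_le_nnnorm (𝕜 := ℂ) B)
  have h2 := (ENNReal.tendsto_toReal hne).comp h
  refine h2.congr fun k => ?_
  simp only [Function.comp]
  rw [← ENNReal.toReal_rpow]
  simp

theorem EscAux.key_tendsto (hn : 0 < n) (Q : Matrix (Fin n) (Fin n) ℝ) (g : ℕ → ℝ)
    (hQ0 : ∀ i j, 0 ≤ Q i j)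
    (C₁ C₂ q C₃ : ℝ) (hC₁ : 0 < C₁) (hq : 0 < q) (hC₃ : 0 < C₃)
    (hg_low : ∀ k, 1 ≤ k → C₁ * (∑ i, ∑ j, (Q ^ k) i j) ≤ g k)
    (hg_up : ∀ k, 1 ≤ k → g k ≤ C₂ * (∑ i, ∑ j, (Q ^ k) i j))
    (hP_low : ∀ k, 1 ≤ k → C₃ * q ^ k ≤ ∑ i, ∑ j, (Q ^ k) i j) :
    Tendsto (fun k : ℕ => -((1:ℝ)/(k:ℝ)) * Real.log (g k)) atTop
      (𝓝 (-Real.log (specRad Q))) := by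
  set B : Matrix (Fin n) (Fin n) ℂ := Q.map (fun x => (x : ℂ)) with hB
  have hBpow : ∀ k : ℕ, B ^ k = (Q ^ k).map (fun x => (x : ℂ)) := by
    intro k
    have : B = (Complex.ofRealHom.mapMatrix : Matrix (Fin n) (Fin n) ℝ →+* _) Q := rfl
    rw [this, ← map_pow]
    rfl
  set u : ℕ → ℝ := fun k => ‖B ^ k‖ with hu
  set P : ℕ → ℝ := fun k => ∑ i, ∑ j, (Q ^ k) i j with hP
  have habs : ∀ k i j, ‖(B ^ k) i j‖ = (Q ^ k) i j := by
    intro k i j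
    rw [hBpow]
    simp only [Matrix.map_apply, Complex.norm_real, Real.norm_eq_abs]
    exact abs_of_nonneg (EscAux.pow_entry_nonneg Q hQ0 k i j)
  have hu_le_P : ∀ k, u k ≤ P k := by
    intro k
    calc u k ≤ ∑ i, ∑ j, ‖(B ^ k) i j‖ := EscAux.norm_le_sum _
      _ = P k := by simp_rw [habs]; rfl
  have hP_le : ∀ k, P k ≤ (n : ℝ)^2 * u k := by
    intro k
    calc P k = ∑ i, ∑ j, ‖(B ^ k) i j‖ := by simp_rw [habs]; rfl
      _ ≤ ∑ _i : Fin n, ∑ _j : Fin n, u k := by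
          apply Finset.sum_le_sum; intro i _
          apply Finset.sum_le_sum; intro j _
          exact EscAux.entry_le_norm _ i j
      _ = (n : ℝ)^2 * u k := by
          simp [Finset.sum_const, Finset.card_univ]
          ring
  have hn2 : (0:ℝ) < (n : ℝ)^2 := by positivity
  have hu_low : ∀ k, 1 ≤ k → (C₃ / (n:ℝ)^2) * q ^ k ≤ u k := by
    intro k hk
    have h1 := hP_low k hk
    have h2 := hP_le k
    rw [div_mul_eq_mul_div, div_le_iff₀ hn2]
    nlinarith [pow_pos hq k]
  have hgel := EscAux.gelfand_real hn B
  have hr : 0 < (spectralRadius ℂ B).toReal :=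
    EscAux.radius_pos u _ q (C₃ / (n:ℝ)^2) hq (by positivity) hu_low hgel
  have hupos : ∀ k, 1 ≤ k → 0 < u k :=
    fun k hk => lt_of_lt_of_le (mul_pos (by positivity) (pow_pos hq k)) (hu_low k hk)
  rw [EscAux.specRad_eq_toReal hn Q]
  apply EscAux.log_limit u g _ C₁ (C₂ * (n:ℝ)^2) hr hupos hC₁ _ _ hgel
  · intro k hk
    calc C₁ * u k ≤ C₁ * P k := mul_le_mul_of_nonneg_left (hu_le_P k) hC₁.le
      _ ≤ g k := hg_low k hk
  · intro k hk
    calc g k ≤ C₂ * P k := hg_up k hk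
      _ ≤ C₂ * ((n:ℝ)^2 * u k) := by
          apply mul_le_mul_of_nonneg_left (hP_le k)
          by_contra hc
          push_neg at hc
          have hPk : 0 < P k := lt_of_lt_of_le (by positivity) (hP_low k hk)
          have := hg_low k hk
          have := hg_up k hk
          nlinarith
      _ = C₂ * (n:ℝ)^2 * u k := by ring
end NormSec

/-! ### Measure-theoretic lemmas for the Markov map -/

/-- The surviving set after `k` steps. -/
def Lam (m : ℕ) (c : Fin (m + 1) → ℝ) (S : Finset (Fin m)) (F : ℝ → ℝ) (k : ℕ) : Set ℝ :=
  {x : ℝ | ∀ j ≤ k, F^[j] x ∈ Dset m c S}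

namespace EscAux
variable {m : ℕ} {c : Fin (m + 1) → ℝ} {S : Finset (Fin m)} {s t : Fin m → ℝ} {F : ℝ → ℝ}

theorem J_disjoint (hmono : StrictMono c) {i j : Fin m} (hij : i ≠ j) :
    Disjoint (Jset m c i) (Jset m c j) := by
  wlog h : i < j generalizing i j
  · exact (this hij.symm (by omega)).symm
  rw [Set.disjoint_left]
  rintro x ⟨_, hx2⟩ ⟨hx3, _⟩
  have hle : (i.succ : Fin (m+1)) ≤ j.castSucc := by
    rw [Fin.le_def]
    simp only [Fin.val_succ, Fin.coe_castSucc]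
    omega
  exact absurd (hx2.trans_le ((hmono.monotone hle).trans hx3.le)) (lt_irrefl x)

theorem mem_Dset {x : ℝ} : x ∈ Dset m c S ↔ ∃ i ∈ S, x ∈ Jset m c i := by
  simp [Dset]

theorem D_inter_J (hmono : StrictMono c) {i : Fin m} (hi : i ∉ S) :
    Dset m c S ∩ Jset m c i = ∅ := by
  ext x
  simp only [Set.mem_inter_iff, mem_Dset, Set.mem_empty_iff_false, iff_false, not_and]
  rintro ⟨l, hl, hxl⟩ hxi
  have hne : l ≠ i := by rintro rfl; exact hi hl
  exact (Set.disjoint_left.mp (J_disjoint hmono hne) hxl) hxi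

theorem lam_subset_D (k : ℕ) : Lam m c S F k ⊆ Dset m c S := fun x hx => by
  have := hx 0 (Nat.zero_le k)
  simpa using this

theorem lam_zero : Lam m c S F 0 = Dset m c S := by
  ext x
  constructor
  · exact fun hx => lam_subset_D 0 hx
  · intro hx j hj
    interval_cases j
    simpa using hx

theorem lam_succ_inter (hs : ∀ j ∈ S, 1 < |s j|)
    (hF : ∀ j ∈ S, ∀ x ∈ Jset m c j, F x = s j * x + t j)
    (hMarkov : ∀ i : Fin m, ∀ j ∈ S,
      Jset m c i ⊆ F '' Jset m c j ∨ F '' Jset m c j ∩ Jset m c i = ∅)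
    {j : Fin m} (hj : j ∈ S) (k : ℕ) :
    Lam m c S F (k+1) ∩ Jset m c j
      = ⋃ i ∈ S, ⋃ (_ : Jset m c i ⊆ F '' Jset m c j),
          (fun x => s j * x + t j) ⁻¹' (Lam m c S F k ∩ Jset m c i) := by
  have hsj : s j ≠ 0 := by
    intro h
    have := hs j hj
    rw [h, abs_zero] at this
    linarith
  ext x
  simp only [Set.mem_inter_iff, Set.mem_iUnion, Set.mem_preimage]
  constructor
  · rintro ⟨hxl, hxj⟩
    have hFx : F x = s j * x + t j := hF j hj x hxj
    have hFxD : F x ∈ Dset m c S := by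
      have := hxl 1 (by omega)
      simpa using this
    obtain ⟨i, hiS, hFxi⟩ := mem_Dset.mp hFxD
    have himg : Jset m c i ⊆ F '' Jset m c j := by
      rcases hMarkov i j hj with h | h
      · exact h
      · exfalso
        have : F x ∈ F '' Jset m c j ∩ Jset m c i := ⟨Set.mem_image_of_mem F hxj, hFxi⟩
        rw [h] at this
        exact this
    refine ⟨i, hiS, himg, ?_, ?_⟩
    · intro t' ht'
      rw [← hFx, ← Function.iterate_succ_apply]
      exact hxl (t'+1) (by omega)
    · rw [← hFx]; exact hFxi
  · rintro ⟨i, hiS, himg, hxin, hxi⟩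
    have himg' : F '' Jset m c j = (fun x => s j * x + t j) '' Jset m c j :=
      Set.image_congr (fun y hy => hF j hj y hy)
    have hmem : s j * x + t j ∈ (fun x => s j * x + t j) '' Jset m c j := by
      rw [← himg']
      exact himg hxi
    obtain ⟨y, hyJ, hyx⟩ := hmem
    have hxy : y = x := by
      have hyx' : s j * y + t j = s j * x + t j := hyx
      have : s j * y = s j * x := by linarith
      exact mul_left_cancel₀ hsj this
    subst hxy
    refine ⟨?_, hyJ⟩
    intro t' ht'
    match t' with
    | 0 => exact mem_Dset.mpr ⟨j, hj, hyJ⟩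
    | Nat.succ t'' =>
      rw [Function.iterate_succ_apply, hF j hj y hyJ]
      exact hxin t'' (by omega)

theorem vol_affine_preimage (a b : ℝ) (ha : a ≠ 0) (E : Set ℝ) :
    volume ((fun x => a * x + b) ⁻¹' E) = ENNReal.ofReal |a⁻¹| * volume E := by
  have hc : (fun x : ℝ => a * x + b) = (fun x : ℝ => x + b) ∘ (fun x : ℝ => a * x) := by
    ext x; simp
  rw [hc, Set.preimage_comp, Real.volume_preimage_mul_left ha]
  congr 1
  exact measure_preimage_add_right volume b E

theorem lam_inter_meas (hmono : StrictMono c) (hs : ∀ j ∈ S, 1 < |s j|)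
    (hF : ∀ j ∈ S, ∀ x ∈ Jset m c j, F x = s j * x + t j)
    (hMarkov : ∀ i : Fin m, ∀ j ∈ S,
      Jset m c i ⊆ F '' Jset m c j ∨ F '' Jset m c j ∩ Jset m c i = ∅) :
    ∀ k i, MeasurableSet (Lam m c S F k ∩ Jset m c i) := by
  intro k
  induction k with
  | zero =>
    intro i
    rw [lam_zero]
    exact (MeasurableSet.biUnion S.countable_toSet fun b _ => measurableSet_Ioo).inter
      measurableSet_Ioo
  | succ k ih =>
    intro i
    by_cases hi : i ∈ S
    · rw [lam_succ_inter hs hF hMarkov hi k]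
      refine MeasurableSet.biUnion S.countable_toSet fun b _ => ?_
      refine MeasurableSet.iUnion fun hsub => ?_
      exact ((measurable_id.const_mul (s i)).add_const (t i)) (ih b)
    · have hempty : Lam m c S F (k+1) ∩ Jset m c i = ∅ := by
        apply Set.eq_empty_of_subset_empty
        rw [← D_inter_J hmono hi]
        exact Set.inter_subset_inter_left _ (lam_subset_D _)
      rw [hempty]
      exact MeasurableSet.empty

theorem vol_rec (hmono : StrictMono c) (hs : ∀ j ∈ S, 1 < |s j|)
    (hF : ∀ j ∈ S, ∀ x ∈ Jset m c j, F x = s j * x + t j)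
    (hMarkov : ∀ i : Fin m, ∀ j ∈ S,
      Jset m c i ⊆ F '' Jset m c j ∨ F '' Jset m c j ∩ Jset m c i = ∅)
    {j : Fin m} (hj : j ∈ S) (k : ℕ) :
    volume (Lam m c S F (k+1) ∩ Jset m c j)
      = ∑ i ∈ @Finset.filter _ (fun i => Jset m c i ⊆ F '' Jset m c j)
          (Classical.decPred _) S,
          ENNReal.ofReal |(s j)⁻¹| * volume (Lam m c S F k ∩ Jset m c i) := by
  classical
  have hsj : s j ≠ 0 := by
    intro h
    have := hs j hj
    rw [h, abs_zero] at this
    linarith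
  rw [lam_succ_inter hs hF hMarkov hj k]
  have hU : (⋃ i ∈ S, ⋃ (_ : Jset m c i ⊆ F '' Jset m c j),
          (fun x => s j * x + t j) ⁻¹' (Lam m c S F k ∩ Jset m c i))
      = ⋃ i ∈ @Finset.filter _ (fun i => Jset m c i ⊆ F '' Jset m c j)
          (Classical.decPred _) S,
          (fun x => s j * x + t j) ⁻¹' (Lam m c S F k ∩ Jset m c i) := by
    ext x
    simp only [Set.mem_iUnion, Finset.mem_filter]
    constructor
    · rintro ⟨i, hiS, hsub, hx⟩; exact ⟨i, ⟨hiS, hsub⟩, hx⟩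
    · rintro ⟨i, ⟨hiS, hsub⟩, hx⟩; exact ⟨i, hiS, hsub, hx⟩
  rw [hU, measure_biUnion_finset ?hd ?hm]
  · exact Finset.sum_congr rfl fun i _ => vol_affine_preimage (s j) (t j) hsj _
  case hd =>
    intro i hi i' hi' hii'
    exact ((J_disjoint hmono hii').mono Set.inter_subset_right
      Set.inter_subset_right).preimage _
  case hm =>
    intro i _
    exact ((measurable_id.const_mul (s j)).add_const (t j))
      (lam_inter_meas hmono hs hF hMarkov k i)

theorem lam_eq_union (k : ℕ) : Lam m c S F k = ⋃ i ∈ S, (Lam m c S F k ∩ Jset m c i) := by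
  ext x
  simp only [Set.mem_iUnion, Set.mem_inter_iff]
  constructor
  · intro hx
    obtain ⟨i, hiS, hxi⟩ := mem_Dset.mp (lam_subset_D k hx)
    exact ⟨i, hiS, hx, hxi⟩
  · rintro ⟨i, _, hx, _⟩; exact hx

theorem vol_lam_eq (hmono : StrictMono c) (hs : ∀ j ∈ S, 1 < |s j|)
    (hF : ∀ j ∈ S, ∀ x ∈ Jset m c j, F x = s j * x + t j)
    (hMarkov : ∀ i : Fin m, ∀ j ∈ S,
      Jset m c i ⊆ F '' Jset m c j ∨ F '' Jset m c j ∩ Jset m c i = ∅) (k : ℕ) :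
    volume (Lam m c S F k) = ∑ i ∈ S, volume (Lam m c S F k ∩ Jset m c i) := by
  conv_lhs => rw [lam_eq_union (F := F) k]
  apply measure_biUnion_finset
  · intro i hi i' hi' hii'
    exact (J_disjoint hmono hii').mono Set.inter_subset_right Set.inter_subset_right
  · intro i _
    exact lam_inter_meas hmono hs hF hMarkov k i

end EscAux

/-- **Theorem 3(ii).** In the Markov setting, if the submatrix of `A` over `S`
is primitive and there is at least one hole, then the escape rate
`γ = lim_{k→∞} -(1/k) log Leb(Λ_k)` exists and equals `-log ρ(Q_1)`. -/
theorem escape_rate_eq_neg_log_spectralRadius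
    (m : ℕ) (hm : 0 < m) (c : Fin (m + 1) → ℝ)
    (hc0 : c 0 = 0) (hc1 : c (Fin.last m) = 1) (hmono : StrictMono c)
    (S : Finset (Fin m)) (s t : Fin m → ℝ) (F : ℝ → ℝ)
    (hs : ∀ j ∈ S, 1 < |s j|)
    (hF : ∀ j ∈ S, ∀ x ∈ Jset m c j, F x = s j * x + t j)
    (hMarkov : ∀ i : Fin m, ∀ j ∈ S,
      Jset m c i ⊆ F '' Jset m c j ∨ F '' Jset m c j ∩ Jset m c i = ∅)
    (A : Matrix (Fin m) (Fin m) ℝ)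
    (hA1 : ∀ i : Fin m, ∀ j ∈ S, Jset m c i ⊆ F '' Jset m c j → A i j = 1)
    (hA0 : ∀ i j : Fin m, ¬(j ∈ S ∧ Jset m c i ⊆ F '' Jset m c j) → A i j = 0)
    (Q : ℝ → Matrix (Fin m) (Fin m) ℝ)
    (hQ : ∀ β i j, Q β i j = A i j * |s j| ^ (-β))
    (hprim : MatPrimitive
      (A.submatrix (fun i : {x // x ∈ S} => (i : Fin m)) (fun j : {x // x ∈ S} => (j : Fin m))))
    (hhole : S ≠ Finset.univ) :
    Tendsto
      (fun k : ℕ =>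
        -((1 : ℝ) / k) * Real.log ((volume {x : ℝ | ∀ j ≤ k, F^[j] x ∈ Dset m c S}).toReal))
      atTop (𝓝 (-Real.log (specRad (Q 1)))) := by
  classical
  haveI : Nonempty (Fin m) := ⟨⟨0, hm⟩⟩
  rcases S.eq_empty_or_nonempty with rfl | hSne
  · -- no surviving intervals at all
    have hD : Dset m c (∅ : Finset (Fin m)) = ∅ := by simp [Dset]
    have hset : ∀ k : ℕ, {x : ℝ | ∀ j ≤ k, F^[j] x ∈ Dset m c (∅ : Finset (Fin m))}
        = (∅ : Set ℝ) := by
      intro k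
      ext x
      simp only [Set.mem_setOf_eq, hD, Set.mem_empty_iff_false, iff_false, not_forall]
      exact ⟨0, Nat.zero_le k, fun h => h⟩
    have hQzero : Q 1 = 0 := by
      ext i j
      rw [hQ, hA0 i j (by simp), zero_mul]
      rfl
    have hmap : (Q 1).map (fun x => (x : ℂ)) = (0 : Matrix (Fin m) (Fin m) ℂ) := by
      rw [hQzero]; ext i j; simp
    have hspec : specRad (Q 1) = 0 := by
      have hrootset : {μ : ℂ | ((Q 1).map (fun x => (x : ℂ))).charpoly.IsRoot μ} = {0} := by
        ext μ
        rw [Set.mem_setOf_eq, ← EscAux.spectrum_eq_root, hmap, spectrum.zero_eq]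
      have : {r : ℝ | ∃ μ : ℂ, ((Q 1).map (fun x => (x : ℂ))).charpoly.IsRoot μ
          ∧ r = ‖μ‖} = {0} := by
        ext r
        constructor
        · rintro ⟨μ, hμ, rfl⟩
          have : μ ∈ ({0} : Set ℂ) := hrootset ▸ hμ
          simp only [Set.mem_singleton_iff] at this ⊢
          rw [this]; simp
        · rintro rfl
          refine ⟨0, ?_, by simp⟩
          have : (0:ℂ) ∈ ({0} : Set ℂ) := rfl
          rw [← hrootset] at this
          exact this
      rw [specRad, this, csSup_singleton]
    rw [hspec, Real.log_zero, neg_zero]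
    have : (fun k : ℕ =>
        -((1 : ℝ) / k) * Real.log ((volume {x : ℝ | ∀ j ≤ k,
          F^[j] x ∈ Dset m c (∅ : Finset (Fin m))}).toReal)) = fun _ => 0 := by
      funext k
      rw [hset k]
      simp
    rw [this]
    exact tendsto_const_nhds
  · -- main case
    set Q1 := Q 1 with hQ1def
    have hQ1 : ∀ i j, Q1 i j = A i j * |s j|⁻¹ := by
      intro i j
      rw [hQ1def, hQ 1 i j, Real.rpow_neg_one]
    have hA01 : ∀ i j, A i j = 0 ∨ A i j = 1 := by
      intro i j
      by_cases h : j ∈ S ∧ Jset m c i ⊆ F '' Jset m c j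
      · exact Or.inr (hA1 i j h.1 h.2)
      · exact Or.inl (hA0 i j h)
    have hQ0 : ∀ i j, 0 ≤ Q1 i j := by
      intro i j
      rw [hQ1]
      rcases hA01 i j with h | h <;> rw [h]
      · simp
      · rw [one_mul]; positivity
    have hQcolS : ∀ i j, j ∉ S → Q1 i j = 0 := by
      intro i j hj
      rw [hQ1, hA0 i j (fun h => hj h.1), zero_mul]
    have hsabs : ∀ j ∈ S, (0:ℝ) < |s j|⁻¹ := by
      intro j hj
      have := hs j hj
      positivity
    -- positivity of some entry in each S-column
    have hcol : ∀ j ∈ S, ∃ i ∈ S, 0 < Q1 i j := by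
      intro j hj
      by_contra hcon
      push_neg at hcon
      obtain ⟨p, hp0, hppos⟩ := hprim
      set Asub := (A.submatrix (fun i : {x // x ∈ S} => (i : Fin m))
        (fun j : {x // x ∈ S} => (j : Fin m))) with hAsub
      have hAz : ∀ i : {x // x ∈ S}, Asub i ⟨j, hj⟩ = 0 := by
        intro i
        have h1 := hcon i i.2
        have h2 := hQ0 i j
        have h3 : Q1 (i : Fin m) j = 0 := le_antisymm h1 h2
        rw [hQ1] at h3
        have h4 : A (i : Fin m) j = 0 := by
          rcases hA01 (i : Fin m) j with h | h
          · exact h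
          · rw [h, one_mul] at h3
            exact absurd h3 (hsabs j hj).ne'
        simpa [hAsub, Matrix.submatrix_apply] using h4
      obtain ⟨p', rfl⟩ : ∃ p', p = p' + 1 := ⟨p - 1, by omega⟩
      have : (Asub ^ (p' + 1)) ⟨j, hj⟩ ⟨j, hj⟩ = 0 := by
        rw [pow_succ, Matrix.mul_apply]
        exact Finset.sum_eq_zero fun l _ => by rw [hAz l, mul_zero]
      exact absurd this (hppos ⟨j, hj⟩ ⟨j, hj⟩).ne'
    -- measure quantities
    set ν : ℕ → Fin m → ℝ :=
      fun k i => (volume (Lam m c S F k ∩ Jset m c i)).toReal with hν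
    have hfin : ∀ k i, volume (Lam m c S F k ∩ Jset m c i) ≠ ⊤ :=
      fun k i => (lt_of_le_of_lt (measure_mono Set.inter_subset_right)
        measure_Ioo_lt_top).ne
    have hν0off : ∀ k i, i ∉ S → ν k i = 0 := by
      intro k i hi
      have hempty : Lam m c S F k ∩ Jset m c i = ∅ := by
        apply Set.eq_empty_of_subset_empty
        rw [← EscAux.D_inter_J hmono hi]
        exact Set.inter_subset_inter_left _ (EscAux.lam_subset_D _)
      simp [hν, hempty]
    have hνnn : ∀ k i, 0 ≤ ν k i := fun k i => ENNReal.toReal_nonneg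
    -- the recursion
    have hνrec : ∀ k j, ν (k+1) j = ∑ i, ν k i * Q1 i j := by
      intro k j
      by_cases hjS : j ∈ S
      · have h := EscAux.vol_rec hmono hs hF hMarkov hjS k
        have hLHS : ν (k+1) j = ∑ i ∈ @Finset.filter _
            (fun i => Jset m c i ⊆ F '' Jset m c j) (Classical.decPred _) S,
            |s j|⁻¹ * ν k i := by
          rw [hν]
          simp only
          rw [h, ENNReal.toReal_sum (fun i _ =>
            ENNReal.mul_ne_top ENNReal.ofReal_ne_top (hfin k i))]
          refine Finset.sum_congr rfl fun i _ => ?_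
          rw [ENNReal.toReal_mul, ENNReal.toReal_ofReal (abs_nonneg _), abs_inv]
        rw [hLHS]
        rw [← Finset.sum_subset (Finset.subset_univ _) ?hz]
        · refine Finset.sum_congr rfl fun i hi => ?_
          rw [Finset.mem_filter] at hi
          rw [hQ1, hA1 i j hjS hi.2, one_mul, mul_comm]
        case hz =>
          intro i _ hiF
          rw [Finset.mem_filter] at hiF
          push_neg at hiF
          by_cases hsub : Jset m c i ⊆ F '' Jset m c j
          · rw [hν0off k i (fun h => hiF h hsub), zero_mul]
          · rw [hQ1, hA0 i j (fun h => hsub h.2), zero_mul, mul_zero]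
      · rw [hν0off (k+1) j hjS]
        rw [Finset.sum_eq_zero fun i _ => by rw [hQcolS i j hjS, mul_zero]]
    -- closed form
    have hνform : ∀ k j, ν k j = ∑ i, ν 0 i * (Q1 ^ k) i j := by
      intro k
      induction k with
      | zero =>
        intro j
        simp [Matrix.one_apply, mul_ite]
      | succ k ih =>
        intro j
        rw [hνrec k j]
        simp_rw [ih]
        rw [pow_succ]
        simp_rw [Matrix.mul_apply, Finset.sum_mul, Finset.mul_sum]
        rw [Finset.sum_comm]
        refine Finset.sum_congr rfl fun l _ => Finset.sum_congr rfl fun i _ => by ring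
    -- total measure
    have hg : ∀ k, (volume (Lam m c S F k)).toReal = ∑ i ∈ S, ν k i := by
      intro k
      rw [EscAux.vol_lam_eq hmono hs hF hMarkov k,
        ENNReal.toReal_sum (fun i _ => hfin k i)]
    -- initial values
    have hν0val : ∀ i ∈ S, ν 0 i = c i.succ - c i.castSucc := by
      intro i hi
      have hinter : Lam m c S F 0 ∩ Jset m c i = Jset m c i := by
        rw [EscAux.lam_zero]
        exact Set.inter_eq_self_of_subset_right
          (fun x hx => EscAux.mem_Dset.mpr ⟨i, hi, hx⟩)
      have hlen : (0:ℝ) ≤ c i.succ - c i.castSucc :=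
        sub_nonneg.mpr (hmono (Fin.castSucc_lt_succ (i := i))).le
      rw [hν]
      simp only
      rw [hinter, Jset, Real.volume_Ioo, ENNReal.toReal_ofReal hlen]
    -- bounds
    set ℓ : Fin m → ℝ := fun i => c i.succ - c i.castSucc with hℓ
    set ℓmin := S.inf' hSne ℓ with hℓmin
    set ℓmax := S.sup' hSne ℓ with hℓmax
    have hℓpos : ∀ i ∈ S, 0 < ℓ i := fun i _ =>
      sub_pos.mpr (hmono (Fin.castSucc_lt_succ (i := i)))
    have hℓminpos : 0 < ℓmin := by
      rw [hℓmin, Finset.lt_inf'_iff]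
      exact fun i hi => hℓpos i hi
    set T : ℕ → ℝ := fun k => ∑ i ∈ S, ∑ j, (Q1 ^ k) i j with hT
    set P : ℕ → ℝ := fun k => ∑ i, ∑ j, (Q1 ^ k) i j with hP
    have hTnn : ∀ k, 0 ≤ T k := fun k => Finset.sum_nonneg fun i _ =>
      Finset.sum_nonneg fun j _ => EscAux.pow_entry_nonneg Q1 hQ0 k i j
    have hTP : ∀ k, T k ≤ P k := fun k =>
      Finset.sum_le_sum_of_subset_of_nonneg (Finset.subset_univ S)
        (fun i _ _ => Finset.sum_nonneg fun j _ => EscAux.pow_entry_nonneg Q1 hQ0 k i j)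
    -- g in terms of T
    have hgform : ∀ k, (volume (Lam m c S F k)).toReal
        = ∑ i ∈ S, ℓ i * ∑ j, (Q1 ^ k) i j := by
      intro k
      have hpowcol : ∀ i j, i ∈ S → j ∉ S → (Q1 ^ k) i j = 0 := by
        intro i j hiS hjS
        match k with
        | 0 =>
          have hne : i ≠ j := by rintro rfl; exact hjS hiS
          rw [pow_zero, Matrix.one_apply_ne hne]
        | Nat.succ k' =>
          rw [pow_succ, Matrix.mul_apply]
          exact Finset.sum_eq_zero fun l _ => by rw [hQcolS l j hjS, mul_zero]
      have hstep : ∀ j, ν k j = ∑ i ∈ S, ν 0 i * (Q1 ^ k) i j := by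
        intro j
        rw [hνform k j, ← Finset.sum_subset (Finset.subset_univ S)
          (fun i _ hi => by rw [hν0off 0 i hi, zero_mul])]
      calc (volume (Lam m c S F k)).toReal
          = ∑ j ∈ S, ∑ i ∈ S, ν 0 i * (Q1 ^ k) i j := by
            rw [hg k]; exact Finset.sum_congr rfl fun j _ => hstep j
        _ = ∑ j, ∑ i ∈ S, ν 0 i * (Q1 ^ k) i j := by
            refine Finset.sum_subset (Finset.subset_univ S) fun j _ hjS => ?_
            exact Finset.sum_eq_zero fun i hiS => by
              rw [hpowcol i j hiS hjS, mul_zero]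
        _ = ∑ i ∈ S, ∑ j, ν 0 i * (Q1 ^ k) i j := Finset.sum_comm
        _ = ∑ i ∈ S, ℓ i * ∑ j, (Q1 ^ k) i j := by
            refine Finset.sum_congr rfl fun i hi => ?_
            rw [Finset.mul_sum]
            exact Finset.sum_congr rfl fun j _ => by rw [hν0val i hi]
    have hgT_low : ∀ k, ℓmin * T k ≤ (volume (Lam m c S F k)).toReal := by
      intro k
      rw [hgform k, hT]
      simp only
      rw [Finset.mul_sum]
      refine Finset.sum_le_sum fun i hi => ?_
      exact mul_le_mul_of_nonneg_right (Finset.inf'_le ℓ hi)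
        (Finset.sum_nonneg fun j _ => EscAux.pow_entry_nonneg Q1 hQ0 k i j)
    have hgT_up : ∀ k, (volume (Lam m c S F k)).toReal ≤ ℓmax * T k := by
      intro k
      rw [hgform k, hT]
      simp only
      rw [Finset.mul_sum]
      refine Finset.sum_le_sum fun i hi => ?_
      exact mul_le_mul_of_nonneg_right (Finset.le_sup' ℓ hi)
        (Finset.sum_nonneg fun j _ => EscAux.pow_entry_nonneg Q1 hQ0 k i j)
    -- column sums
    set qc : Fin m → ℝ := fun j => ∑ i ∈ S, Q1 i j with hqc
    set qmin := S.inf' hSne qc with hqmin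
    have hqcpos : ∀ j ∈ S, 0 < qc j := by
      intro j hj
      obtain ⟨i, hiS, hipos⟩ := hcol j hj
      exact Finset.sum_pos' (fun i _ => hQ0 i j) ⟨i, hiS, hipos⟩
    have hqminpos : 0 < qmin := by
      rw [hqmin, Finset.lt_inf'_iff]
      exact fun j hj => hqcpos j hj
    have hqmin_le : ∀ j ∈ S, qmin ≤ qc j := fun j hj => Finset.inf'_le qc hj
    have hTsucc : ∀ k, qmin * T k ≤ T (k+1) :=
      fun k => EscAux.T_succ_ge Q1 S hQ0 qmin hqmin_le hQcolS k
    have hT0 : T 0 = S.card := by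
      rw [hT]
      simp [Matrix.one_apply]
    have hTlow : ∀ k, qmin ^ k * S.card ≤ T k := by
      intro k
      induction k with
      | zero => rw [pow_zero, one_mul, hT0]
      | succ k ih =>
        calc qmin ^ (k+1) * S.card = qmin * (qmin ^ k * S.card) := by ring
          _ ≤ qmin * T k := mul_le_mul_of_nonneg_left ih hqminpos.le
          _ ≤ T (k+1) := hTsucc k
    set Cq := ∑ l, ∑ i, Q1 i l with hCq
    have hCqpos : 0 < Cq := by
      obtain ⟨j₀, hj₀⟩ := hSne
      have h1 : qc j₀ ≤ ∑ i, Q1 i j₀ :=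
        Finset.sum_le_sum_of_subset_of_nonneg (Finset.subset_univ S)
          (fun i _ _ => hQ0 i j₀)
      have h2 : ∑ i, Q1 i j₀ ≤ Cq := by
        rw [hCq]
        exact Finset.single_le_sum (f := fun l => ∑ i, Q1 i l)
          (fun l _ => Finset.sum_nonneg fun i _ => hQ0 i l) (Finset.mem_univ j₀)
      exact lt_of_lt_of_le (hqcpos j₀ hj₀) (h1.trans h2)
    have hPsucc : ∀ k, P (k+1) ≤ Cq * T k :=
      fun k => EscAux.P_succ_le Q1 S hQ0 hQcolS k
    -- apply the key lemma
    have hcard : (0:ℝ) < S.card := by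
      obtain ⟨j₀, hj₀⟩ := hSne
      exact_mod_cast Finset.card_pos.mpr ⟨j₀, hj₀⟩
    have main := EscAux.key_tendsto hm Q1
      (fun k => (volume (Lam m c S F k)).toReal) hQ0
      (ℓmin * qmin / Cq) ℓmax qmin (S.card) (by positivity) hqminpos hcard
      ?glow ?gup ?plow
    · exact main
    case glow =>
      intro k hk
      obtain ⟨k', rfl⟩ : ∃ k', k = k' + 1 := ⟨k - 1, by omega⟩
      have h1 := hPsucc k'
      have h2 := hTsucc k'
      have h3 := hgT_low (k' + 1)
      have h4 := hTnn k'
      rw [div_mul_eq_mul_div, div_le_iff₀ hCqpos]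
      calc ℓmin * qmin * P (k'+1) ≤ ℓmin * qmin * (Cq * T k') := by
            apply mul_le_mul_of_nonneg_left h1
            positivity
        _ = ℓmin * (qmin * T k') * Cq := by ring
        _ ≤ ℓmin * T (k'+1) * Cq := by
            apply mul_le_mul_of_nonneg_right _ hCqpos.le
            exact mul_le_mul_of_nonneg_left h2 hℓminpos.le
        _ ≤ (volume (Lam m c S F (k'+1))).toReal * Cq :=
            mul_le_mul_of_nonneg_right h3 hCqpos.le
    case gup =>
      intro k _
      have hℓmaxpos : 0 < ℓmax := by
        obtain ⟨j₀, hj₀⟩ := hSne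
        exact lt_of_lt_of_le (hℓpos j₀ hj₀) (Finset.le_sup' ℓ hj₀)
      calc (volume (Lam m c S F k)).toReal ≤ ℓmax * T k := hgT_up k
        _ ≤ ℓmax * P k := mul_le_mul_of_nonneg_left (hTP k) hℓmaxpos.le
    case plow =>
      intro k _
      calc (S.card : ℝ) * qmin ^ k = qmin ^ k * S.card := by ring
        _ ≤ T k := hTlow k
        _ ≤ P k := hTP k
end

section
/- In the Markov setting, for every k ≥ 0 the Lebesgue measure of the k-th surviving set satisfies Leb(Λ_k) = Σ_{i,j∈S} (Q_1^k)_{ij} · Leb(J_i), where Q_1 is the weighted transition matrix with β = 1 (entries a_{ij}·|s_j|^{-1}) and Q_1^k is its k-th matrix power. -/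
open MeasureTheory

/-- Distinct partition intervals are disjoint. -/
lemma Jset_disjoint {m : ℕ} {c : Fin (m + 1) → ℝ} (hmono : StrictMono c)
    {i j : Fin m} (hij : i ≠ j) : Jset m c i ∩ Jset m c j = ∅ := by
  have key : ∀ i j : Fin m, i < j → Jset m c i ∩ Jset m c j = ∅ := by
    intro i j hij
    have hle : c i.succ ≤ c j.castSucc := by
      apply hmono.monotone
      simp only [Fin.le_def, Fin.val_succ, Fin.coe_castSucc]
      exact hij
    ext x
    simp only [Jset, Set.mem_inter_iff, Set.mem_Ioo, Set.mem_empty_iff_false, iff_false, not_and]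
    intro h1 h2 _
    linarith [h1.2]
  rcases lt_or_gt_of_ne hij with h | h
  · exact key _ _ h
  · rw [Set.inter_comm]; exact key _ _ h

/-- **Measure of the surviving sets.** In the Markov setting, for every `k ≥ 0`
the Lebesgue measure of `Λ_k = {x : F^j(x) ∈ D, j = 0,…,k}` equals
`Σ_{i,j ∈ S} (Q_1^k)_{ij} · Leb(J_i)`, where `Q_1` is the weighted transition
matrix with `β = 1`. -/
theorem measure_surviving_set_eq_sum_pow_weighted_transition
    (m : ℕ) (hm : 0 < m) (c : Fin (m + 1) → ℝ)
    (hc0 : c 0 = 0) (hc1 : c (Fin.last m) = 1) (hmono : StrictMono c)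
    (S : Finset (Fin m)) (s t : Fin m → ℝ) (F : ℝ → ℝ)
    (hs : ∀ j ∈ S, 1 < |s j|)
    (hF : ∀ j ∈ S, ∀ x ∈ Jset m c j, F x = s j * x + t j)
    (hMarkov : ∀ i : Fin m, ∀ j ∈ S,
      Jset m c i ⊆ F '' Jset m c j ∨ F '' Jset m c j ∩ Jset m c i = ∅)
    (A : Matrix (Fin m) (Fin m) ℝ)
    (hA1 : ∀ i : Fin m, ∀ j ∈ S, Jset m c i ⊆ F '' Jset m c j → A i j = 1)
    (hA0 : ∀ i j : Fin m, ¬(j ∈ S ∧ Jset m c i ⊆ F '' Jset m c j) → A i j = 0)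
    (Q₁ : Matrix (Fin m) (Fin m) ℝ)
    (hQ₁ : ∀ i j, Q₁ i j = A i j * |s j|⁻¹) :
    ∀ k : ℕ,
      (volume {x : ℝ | ∀ j ≤ k, F^[j] x ∈ Dset m c S}).toReal =
        ∑ i ∈ S, ∑ j ∈ S, (Q₁ ^ k) i j * (volume (Jset m c i)).toReal := by
  intro k
  classical
  set D := Dset m c S with hD
  set g : Fin m → ℝ → ℝ := fun j x => s j * x + t j with hg
  set L : ℕ → Set ℝ := fun n => {x : ℝ | ∀ j ≤ n, F^[j] x ∈ D} with hLdef
  -- basic facts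
  have hs0 : ∀ j ∈ S, s j ≠ 0 := by
    intro j hj h
    have := hs j hj
    rw [h, abs_zero] at this
    linarith
  have hJne : ∀ i : Fin m, (Jset m c i).Nonempty := fun i =>
    Set.nonempty_Ioo.2 (hmono (Fin.castSucc_lt_succ (i := i)))
  have hJd : ∀ i j : Fin m, i ≠ j → Jset m c i ∩ Jset m c j = ∅ := fun i j h =>
    Jset_disjoint hmono h
  have hJmeas : ∀ i : Fin m, MeasurableSet (Jset m c i) := fun i => measurableSet_Ioo
  have hJfin : ∀ i : Fin m, volume (Jset m c i) ≠ ⊤ := fun i => by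
    rw [Jset, Real.volume_Ioo]; exact ENNReal.ofReal_ne_top
  have hmemD : ∀ x : ℝ, x ∈ D ↔ ∃ j ∈ S, x ∈ Jset m c j := by
    intro x
    simp only [hD, Dset, Set.mem_iUnion, exists_prop]
  have hgmeas : ∀ j : Fin m, Measurable (g j) := fun j =>
    (measurable_id.const_mul _).add_const _
  have hvolpre : ∀ j ∈ S, ∀ E : Set ℝ,
      volume (g j ⁻¹' E) = ENNReal.ofReal |s j|⁻¹ * volume E := by
    intro j hj E
    have h0 := hs0 j hj
    have hcomp : g j ⁻¹' E = (s j * ·) ⁻¹' ((· + t j) ⁻¹' E) := rfl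
    rw [hcomp, Real.volume_preimage_mul_left h0, measure_preimage_add_right volume (t j) E,
      abs_inv]
  -- structure of the surviving sets
  have hL0 : L 0 = D := by
    ext x
    simp only [hLdef, Set.mem_setOf_eq, Nat.le_zero]
    constructor
    · intro h; simpa using h 0 rfl
    · intro h j hj
      rw [hj]; simpa using h
  have hLD : ∀ n, L n ⊆ D := by
    intro n x hx
    simpa using hx 0 (Nat.zero_le n)
  have hrec : ∀ n, L (n + 1) = ⋃ j ∈ S, (Jset m c j ∩ g j ⁻¹' (L n)) := by
    intro n
    ext x
    simp only [hLdef, Set.mem_setOf_eq, Set.mem_iUnion, Set.mem_inter_iff, Set.mem_preimage,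
      exists_prop]
    constructor
    · intro h
      obtain ⟨j, hjS, hxj⟩ := (hmemD x).1 (by simpa using h 0 (Nat.zero_le _))
      refine ⟨j, hjS, hxj, ?_⟩
      intro l hl
      have h2 := h (l + 1) (Nat.succ_le_succ hl)
      rw [Function.iterate_succ_apply, hF j hjS x hxj] at h2
      exact h2
    · rintro ⟨j, hjS, hxj, hgx⟩ l hl
      cases l with
      | zero => simpa using (hmemD x).2 ⟨j, hjS, hxj⟩
      | succ l' =>
        rw [Function.iterate_succ_apply, hF j hjS x hxj]
        exact hgx l' (Nat.succ_le_succ_iff.1 hl)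
  have hLmeas : ∀ n, MeasurableSet (L n) := by
    intro n
    induction n with
    | zero =>
      rw [hL0, hD, Dset]
      exact MeasurableSet.iUnion fun j => MeasurableSet.iUnion fun _ => hJmeas j
    | succ n ih =>
      rw [hrec n]
      exact MeasurableSet.iUnion fun j => MeasurableSet.iUnion fun _ =>
        (hJmeas j).inter (hgmeas j ih)
  have hLJ0 : ∀ n, ∀ i : Fin m, i ∉ S → L n ∩ Jset m c i = ∅ := by
    intro n i hi
    apply Set.eq_empty_iff_forall_notMem.2
    rintro x ⟨hxL, hxi⟩
    obtain ⟨j, hjS, hxj⟩ := (hmemD x).1 (hLD n hxL)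
    have hne : j ≠ i := fun h => hi (h ▸ hjS)
    have hx2 : x ∈ Jset m c j ∩ Jset m c i := ⟨hxj, hxi⟩
    rw [hJd j i hne] at hx2
    exact hx2
  have hLJ : ∀ n, ∀ j ∈ S, L (n + 1) ∩ Jset m c j = Jset m c j ∩ g j ⁻¹' (L n) := by
    intro n j hj
    rw [hrec n]
    ext x
    simp only [Set.mem_inter_iff, Set.mem_iUnion, Set.mem_preimage, exists_prop]
    constructor
    · rintro ⟨⟨j', hj', hxj', hgx⟩, hxj⟩
      have hjj : j' = j := by
        by_contra hne
        have hx2 : x ∈ Jset m c j' ∩ Jset m c j := ⟨hxj', hxj⟩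
        rw [hJd j' j hne] at hx2
        exact hx2
      subst hjj
      exact ⟨hxj', hgx⟩
    · rintro ⟨hxj, hgx⟩
      exact ⟨⟨j, hj, hxj, hgx⟩, hxj⟩
  have hfin : ∀ n, ∀ i : Fin m, volume (L n ∩ Jset m c i) ≠ ⊤ := fun n i =>
    ne_top_of_le_ne_top (hJfin i) (measure_mono Set.inter_subset_right)
  have hQnn : ∀ i j : Fin m, 0 ≤ Q₁ i j := by
    intro i j
    rw [hQ₁]
    rcases Classical.em (j ∈ S ∧ Jset m c i ⊆ F '' Jset m c j) with h | h
    · rw [hA1 i j h.1 h.2]; positivity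
    · rw [hA0 i j h]; simp
  -- the key single-step measure identity
  have hterm : ∀ n, ∀ j ∈ S, ∀ i ∈ S,
      volume (Jset m c j ∩ g j ⁻¹' (L n ∩ Jset m c i))
        = ENNReal.ofReal (Q₁ i j) * volume (L n ∩ Jset m c i) := by
    intro n j hj i _
    have himg : F '' Jset m c j = g j '' Jset m c j :=
      Set.image_congr fun x hx => hF j hj x hx
    rcases hMarkov i j hj with hcov | hdis
    · have hAij : A i j = 1 := hA1 i j hj hcov
      have hinj : Function.Injective (g j) := by
        intro a b hab
        have h1 : s j * a + t j = s j * b + t j := hab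
        have h2 : s j * a = s j * b := by linarith
        exact mul_left_cancel₀ (hs0 j hj) h2
      have hsub : g j ⁻¹' (L n ∩ Jset m c i) ⊆ Jset m c j := by
        intro x hx
        have hgxi : g j x ∈ Jset m c i := hx.2
        obtain ⟨y, hy, hxy⟩ := (himg ▸ hcov) hgxi
        exact hinj hxy ▸ hy
      rw [Set.inter_eq_self_of_subset_right hsub, hvolpre j hj, hQ₁, hAij, one_mul]
    · have hAij : A i j = 0 := by
        apply hA0
        rintro ⟨-, hcov⟩
        obtain ⟨x, hx⟩ := hJne i
        have hx2 : x ∈ F '' Jset m c j ∩ Jset m c i := ⟨hcov hx, hx⟩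
        rw [hdis] at hx2
        exact hx2
      have hempty : Jset m c j ∩ g j ⁻¹' (L n ∩ Jset m c i) = ∅ := by
        apply Set.eq_empty_iff_forall_notMem.2
        rintro x ⟨hxj, hgx⟩
        have hx2 : g j x ∈ F '' Jset m c j ∩ Jset m c i :=
          ⟨himg ▸ ⟨x, hxj, rfl⟩, hgx.2⟩
        rw [hdis] at hx2
        exact hx2
      rw [hempty, hQ₁, hAij, zero_mul]
      simp
  -- the measure recursion over one step
  have hrecvol : ∀ n, ∀ j ∈ S,
      volume (L (n + 1) ∩ Jset m c j)
        = ∑ i ∈ S, ENNReal.ofReal (Q₁ i j) * volume (L n ∩ Jset m c i) := by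
    intro n j hj
    rw [hLJ n j hj]
    have hdecomp : Jset m c j ∩ g j ⁻¹' (L n)
        = ⋃ i ∈ S, (Jset m c j ∩ g j ⁻¹' (L n ∩ Jset m c i)) := by
      ext x
      simp only [Set.mem_inter_iff, Set.mem_preimage, Set.mem_iUnion, exists_prop]
      constructor
      · rintro ⟨hxj, hgx⟩
        obtain ⟨i, hiS, hgxi⟩ := (hmemD _).1 (hLD n hgx)
        exact ⟨i, hiS, hxj, hgx, hgxi⟩
      · rintro ⟨i, _, hxj, hgx, _⟩
        exact ⟨hxj, hgx⟩
    rw [hdecomp, measure_biUnion_finset ?_ fun i _ =>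
      (hJmeas j).inter (hgmeas j ((hLmeas n).inter (hJmeas i)))]
    · exact Finset.sum_congr rfl fun i hi => hterm n j hj i hi
    · intro i _ i' _ hne
      apply Set.disjoint_left.2
      rintro x ⟨_, _, h1⟩ ⟨_, _, h2⟩
      have hx2 : g j x ∈ Jset m c i ∩ Jset m c i' := ⟨h1, h2⟩
      rw [hJd i i' hne] at hx2
      exact hx2
  -- real-valued recursion over all indices
  have hrecR : ∀ n, ∀ j : Fin m,
      (volume (L (n + 1) ∩ Jset m c j)).toReal
        = ∑ i : Fin m, Q₁ i j * (volume (L n ∩ Jset m c i)).toReal := by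
    intro n j
    by_cases hj : j ∈ S
    · rw [hrecvol n j hj,
        ENNReal.toReal_sum fun i _ => ENNReal.mul_ne_top ENNReal.ofReal_ne_top (hfin n i)]
      calc ∑ i ∈ S, (ENNReal.ofReal (Q₁ i j) * volume (L n ∩ Jset m c i)).toReal
          = ∑ i ∈ S, Q₁ i j * (volume (L n ∩ Jset m c i)).toReal :=
            Finset.sum_congr rfl fun i _ => by
              rw [ENNReal.toReal_mul, ENNReal.toReal_ofReal (hQnn i j)]
        _ = ∑ i : Fin m, Q₁ i j * (volume (L n ∩ Jset m c i)).toReal := by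
            apply Finset.sum_subset (Finset.subset_univ S)
            intro i _ hiS
            rw [hLJ0 n i hiS, measure_empty]
            simp
    · have hz : ∀ i : Fin m, Q₁ i j = 0 := fun i => by
        rw [hQ₁, hA0 i j fun h => hj h.1, zero_mul]
      rw [hLJ0 (n + 1) j hj, measure_empty]
      simp [hz]
  -- the main induction
  have hmain : ∀ n, ∀ j : Fin m,
      (volume (L n ∩ Jset m c j)).toReal
        = ∑ i : Fin m, (Q₁ ^ n) i j * (volume (L 0 ∩ Jset m c i)).toReal := by
    intro n
    induction n with
    | zero =>
      intro j
      simp only [pow_zero, Matrix.one_apply, ite_mul, one_mul, zero_mul]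
      simp
    | succ n ih =>
      intro j
      calc (volume (L (n + 1) ∩ Jset m c j)).toReal
          = ∑ i' : Fin m, Q₁ i' j * (volume (L n ∩ Jset m c i')).toReal := hrecR n j
        _ = ∑ i' : Fin m, ∑ i : Fin m,
              (Q₁ ^ n) i i' * Q₁ i' j * (volume (L 0 ∩ Jset m c i)).toReal := by
            apply Finset.sum_congr rfl
            intro i' _
            rw [ih i', Finset.mul_sum]
            apply Finset.sum_congr rfl
            intro i _
            ring
        _ = ∑ i : Fin m, (Q₁ ^ (n + 1)) i j * (volume (L 0 ∩ Jset m c i)).toReal := by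
            rw [Finset.sum_comm]
            apply Finset.sum_congr rfl
            intro i _
            rw [pow_succ, Matrix.mul_apply, Finset.sum_mul]
  -- assembly
  have hLsplit : volume (L k) = ∑ j ∈ S, volume (L k ∩ Jset m c j) := by
    have hU : L k = ⋃ j ∈ S, (L k ∩ Jset m c j) := by
      ext x
      simp only [Set.mem_iUnion, Set.mem_inter_iff, exists_prop]
      constructor
      · intro hx
        obtain ⟨j, hjS, hxj⟩ := (hmemD x).1 (hLD k hx)
        exact ⟨j, hjS, hx, hxj⟩
      · rintro ⟨j, _, hx, _⟩
        exact hx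
    conv_lhs => rw [hU]
    rw [measure_biUnion_finset ?_ fun j _ => (hLmeas k).inter (hJmeas j)]
    intro i _ i' _ hne
    apply Set.disjoint_left.2
    rintro x ⟨_, h1⟩ ⟨_, h2⟩
    have hx2 : x ∈ Jset m c i ∩ Jset m c i' := ⟨h1, h2⟩
    rw [hJd i i' hne] at hx2
    exact hx2
  show (volume (L k)).toReal = _
  rw [hLsplit, ENNReal.toReal_sum fun j _ => hfin k j]
  calc ∑ j ∈ S, (volume (L k ∩ Jset m c j)).toReal
      = ∑ j ∈ S, ∑ i : Fin m, (Q₁ ^ k) i j * (volume (L 0 ∩ Jset m c i)).toReal :=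
        Finset.sum_congr rfl fun j _ => hmain k j
    _ = ∑ j ∈ S, ∑ i ∈ S, (Q₁ ^ k) i j * (volume (Jset m c i)).toReal := by
        apply Finset.sum_congr rfl
        intro j _
        rw [← Finset.sum_subset (Finset.subset_univ S) ?_]
        · apply Finset.sum_congr rfl
          intro i hi
          rw [show L 0 ∩ Jset m c i = Jset m c i by
            rw [hL0]
            exact Set.inter_eq_self_of_subset_right fun x hx => (hmemD x).2 ⟨i, hi, hx⟩]
        · intro i _ hiS
          rw [hLJ0 0 i hiS, measure_empty]
          simp
    _ = ∑ i ∈ S, ∑ j ∈ S, (Q₁ ^ k) i j * (volume (Jset m c i)).toReal := Finset.sum_comm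
end
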